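/- Let α ≠ 0 and (a₁, b₁) ∈ ℝ² with (a₁, b₁) ≠ (0,0). Then the pair x* = ∛(4a₁³/(3α(a₁² + b₁²))), y* = ∛(4b₁³/(3α(a₁² + b₁²))) (real cube roots) satisfies the algebraic system b₁ x* = a₁ y* and a₁ x* + b₁ y* = (3α/4) ((x*)² + (y*)²)². -/
import Mathlib


open Real

/-- The real cube root. -/
noncomputable def cbrt (x : ℝ) : ℝ := Real.sign x * |x| ^ ((1 : ℝ) / 3)

lemma cbrt_cube_aux (x : ℝ) : cbrt x ^ 3 = x := by
  unfold cbrt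
  rcases lt_trichotomy x 0 with h | h | h
  · rw [Real.sign_of_neg h, abs_of_neg h]
    rw [mul_pow, ← Real.rpow_natCast ((-x) ^ ((1:ℝ)/3)) 3,
      ← Real.rpow_mul (by linarith)]
    norm_num
  · simp [h]
  · rw [Real.sign_of_pos h, abs_of_pos h]
    rw [mul_pow, ← Real.rpow_natCast (x ^ ((1:ℝ)/3)) 3,
      ← Real.rpow_mul (by linarith)]
    norm_num

lemma cbrt_cube (a : ℝ) : cbrt (a ^ 3) = a := by
  unfold cbrt
  rcases lt_trichotomy a 0 with h | h | h
  · have h3 : a ^ 3 < 0 := by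
      have := pow_pos (neg_pos.mpr h) 3
      nlinarith
    rw [Real.sign_of_neg h3, abs_of_neg h3]
    have e : -a ^ 3 = (-a) ^ 3 := by ring
    rw [e, ← Real.rpow_natCast (-a) 3, ← Real.rpow_mul (by linarith)]
    norm_num
  · simp [h]
  · have h3 : 0 < a ^ 3 := by positivity
    rw [Real.sign_of_pos h3, abs_of_pos h3]
    rw [← Real.rpow_natCast a 3, ← Real.rpow_mul (by linarith)]
    norm_num

lemma cbrt_mul (x y : ℝ) : cbrt (x * y) = cbrt x * cbrt y := by
  unfold cbrt
  rw [abs_mul, Real.mul_rpow (abs_nonneg x) (abs_nonneg y)]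
  rcases lt_trichotomy x 0 with hx | hx | hx <;>
    rcases lt_trichotomy y 0 with hy | hy | hy
  · rw [Real.sign_of_neg hx, Real.sign_of_neg hy,
      Real.sign_of_pos (mul_pos_of_neg_of_neg hx hy)]; ring
  · simp [hy]
  · rw [Real.sign_of_neg hx, Real.sign_of_pos hy,
      Real.sign_of_neg (mul_neg_of_neg_of_pos hx hy)]; ring
  · simp [hx]
  · simp [hx]
  · simp [hx]
  · rw [Real.sign_of_pos hx, Real.sign_of_neg hy,
      Real.sign_of_neg (mul_neg_of_pos_of_neg hx hy)]; ring
  · simp [hy]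
  · rw [Real.sign_of_pos hx, Real.sign_of_pos hy,
      Real.sign_of_pos (mul_pos hx hy)]; ring

/-- the pair (x*, y*) given by real cube roots solves the algebraic system
b₁x* = a₁y* and a₁x* + b₁y* = (3α/4)((x*)² + (y*)²)². -/
theorem stmt_9 (α a₁ b₁ : ℝ) (hα : α ≠ 0) (hab : (a₁, b₁) ≠ (0, 0)) :
    b₁ * cbrt (4 * a₁ ^ 3 / (3 * α * (a₁ ^ 2 + b₁ ^ 2)))
      = a₁ * cbrt (4 * b₁ ^ 3 / (3 * α * (a₁ ^ 2 + b₁ ^ 2))) ∧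
    a₁ * cbrt (4 * a₁ ^ 3 / (3 * α * (a₁ ^ 2 + b₁ ^ 2)))
        + b₁ * cbrt (4 * b₁ ^ 3 / (3 * α * (a₁ ^ 2 + b₁ ^ 2)))
      = (3 * α / 4) * (cbrt (4 * a₁ ^ 3 / (3 * α * (a₁ ^ 2 + b₁ ^ 2))) ^ 2 +
          cbrt (4 * b₁ ^ 3 / (3 * α * (a₁ ^ 2 + b₁ ^ 2))) ^ 2) ^ 2 := by
  have hS : a₁ ^ 2 + b₁ ^ 2 ≠ 0 := by
    intro h
    apply hab
    have ha : a₁ = 0 := by nlinarith [sq_nonneg a₁, sq_nonneg b₁]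
    have hb : b₁ = 0 := by nlinarith [sq_nonneg a₁, sq_nonneg b₁]
    simp [ha, hb]
  set S := a₁ ^ 2 + b₁ ^ 2 with hSdef
  set k := cbrt (4 / (3 * α * S)) with hk
  have e1 : 4 * a₁ ^ 3 / (3 * α * S) = a₁ ^ 3 * (4 / (3 * α * S)) := by ring
  have e2 : 4 * b₁ ^ 3 / (3 * α * S) = b₁ ^ 3 * (4 / (3 * α * S)) := by ring
  have hx : cbrt (4 * a₁ ^ 3 / (3 * α * S)) = a₁ * k := by
    rw [e1, cbrt_mul, cbrt_cube]
  have hy : cbrt (4 * b₁ ^ 3 / (3 * α * S)) = b₁ * k := by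
    rw [e2, cbrt_mul, cbrt_cube]
  rw [hx, hy]
  have hk3 : k ^ 3 = 4 / (3 * α * S) := cbrt_cube_aux _
  constructor
  · ring
  · have h3αS : 3 * α * S ≠ 0 := by
      intro h; rcases mul_eq_zero.mp h with h | h
      · rcases mul_eq_zero.mp h with h | h
        · norm_num at h
        · exact hα h
      · exact hS h
    have key : (3 * α * S) * k ^ 3 = 4 := by
      rw [hk3]; field_simp
    have step : (3 * α / 4) * ((a₁ * k) ^ 2 + (b₁ * k) ^ 2) ^ 2
        = (3 * α * S * k ^ 3) * (k * S) / 4 := by rw [hSdef]; ring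
    rw [step, key, hSdef]; ring
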